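/- arXiv:2007.03418 — 7 statements merged into one kernel-verified Lean document; each statement's English description precedes it below -/
import Mathlib

section
/- Suppose V_i ≠ 0 for every i. Then the real 2n×2n matrix J is singular (det J = 0) if and only if the complex 2n×2n matrix Y′ is singular (det Y′ = 0). -/
open Matrix Complex

/-- In a field, sandwiching by matrices with nonzero determinant
preserves singularity. -/
lemma det_sandwich_zero_iff {m : Type*} [Fintype m] [DecidableEq m]
    {K : Type*} [Field K] (X Y A : Matrix m m K) (hX : X.det ≠ 0) (hY : Y.det ≠ 0) :
    (X * A * Y).det = 0 ↔ A.det = 0 := by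
  simp [Matrix.det_mul, mul_eq_zero, hX, hY]

lemma conj_sandwich_scalar (v t : ℝ) (y : ℂ) :
    (starRingEnd ℂ) ((v : ℂ) * Complex.exp (Complex.I * t)) *
      (y * Complex.exp (2 * Complex.I * t)) *
      ((starRingEnd ℂ) ((v : ℂ) * Complex.exp (Complex.I * t))) = y * (v : ℂ) ^ 2 := by
  have h1 : (starRingEnd ℂ) (Complex.exp (Complex.I * t)) =
      Complex.exp (-(Complex.I * t)) := by
    rw [← Complex.exp_conj]
    congr 1
    simp [Complex.conj_I]
  have key : Complex.exp (-(Complex.I * t)) * Complex.exp (2 * Complex.I * t) *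
      Complex.exp (-(Complex.I * t)) = 1 := by
    rw [← Complex.exp_add, ← Complex.exp_add,
      show -(Complex.I * (t:ℂ)) + 2 * Complex.I * t + -(Complex.I * t) = 0 by ring,
      Complex.exp_zero]
  simp only [_root_.map_mul, Complex.conj_ofReal, h1]
  linear_combination (v : ℂ) ^ 2 * y * key

lemma sandwich_conj_scalar (v t : ℝ) (y : ℂ) :
    ((v : ℂ) * Complex.exp (Complex.I * t)) *
      ((starRingEnd ℂ) (y * Complex.exp (2 * Complex.I * t))) *
      ((v : ℂ) * Complex.exp (Complex.I * t)) = (starRingEnd ℂ) y * (v : ℂ) ^ 2 := by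
  have h1 : (starRingEnd ℂ) (Complex.exp (2 * Complex.I * t)) =
      Complex.exp (-(2 * Complex.I * t)) := by
    rw [← Complex.exp_conj]
    congr 1
    simp only [_root_.map_mul, Complex.conj_I, Complex.conj_ofReal, map_ofNat]
    ring
  have key : Complex.exp (Complex.I * t) * Complex.exp (-(2 * Complex.I * t)) *
      Complex.exp (Complex.I * t) = 1 := by
    rw [← Complex.exp_add, ← Complex.exp_add,
      show Complex.I * (t:ℂ) + -(2 * Complex.I * t) + Complex.I * t = 0 by ring,
      Complex.exp_zero]
  simp only [_root_.map_mul, Complex.conj_ofReal, h1]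
  linear_combination (v : ℂ) ^ 2 * (starRingEnd ℂ) y * key

/- Lemma 1: with all voltage magnitudes nonzero, the real algebraic Jacobian `J`
is singular iff the complex block matrix `Y′` is singular. -/
theorem impasse_jacobian_singular_iff_Yprime_singular
    (n : ℕ) (hn : 1 ≤ n)
    (Y₁ Y₂ : Matrix (Fin n) (Fin n) ℂ) (hY₂diag : Y₂.IsDiag)
    (θ V : Fin n → ℝ) (hV : ∀ i, V i ≠ 0)
    (D W Z : Matrix (Fin n) (Fin n) ℂ)
    (hD : D = Matrix.diagonal fun i => (V i : ℂ) * Complex.exp (Complex.I * (θ i : ℂ)))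
    (hW : W = D * Y₁.map (starRingEnd ℂ) * D.map (starRingEnd ℂ))
    (hZ : Z = Matrix.diagonal fun i => Y₂ i i * (V i : ℂ) ^ 2)
    (E F M N : Matrix (Fin n) (Fin n) ℝ)
    (hE : E = fun i j => (W i j).im - (Z i j).im)
    (hF : F = fun i j => (W i j).re - (Z i j).re)
    (hM : M = fun i j => -(W i j).re - (Z i j).re)
    (hN : N = fun i j => (W i j).im + (Z i j).im)
    (J : Matrix (Fin n ⊕ Fin n) (Fin n ⊕ Fin n) ℝ)
    (hJ : J = Matrix.fromBlocks E F M N)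
    (T : Matrix (Fin n) (Fin n) ℂ)
    (hT : T = Matrix.diagonal fun i => Complex.exp (2 * Complex.I * (θ i : ℂ)))
    (Y' : Matrix (Fin n ⊕ Fin n) (Fin n ⊕ Fin n) ℂ)
    (hY' : Y' = Matrix.fromBlocks (Y₁.map (starRingEnd ℂ)) ((Y₂ * T).map (starRingEnd ℂ))
      (Y₂ * T) Y₁) :
    J.det = 0 ↔ Y'.det = 0 := by
  classical
  set Jc : Matrix (Fin n ⊕ Fin n) (Fin n ⊕ Fin n) ℂ := J.map (algebraMap ℝ ℂ) with hJc
  -- step 0 : J singular iff Jc singular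
  have step0 : J.det = 0 ↔ Jc.det = 0 := by
    have h : algebraMap ℝ ℂ J.det = Jc.det := RingHom.map_det (algebraMap ℝ ℂ) J
    rw [← h]
    exact ⟨fun h' => by rw [h']; simp,
      fun h' => (map_eq_zero_iff _ (RingHom.injective _)).mp h'⟩
  -- block matrices
  set Ws : Matrix (Fin n) (Fin n) ℂ := W.map (starRingEnd ℂ) with hWs
  set Zs : Matrix (Fin n) (Fin n) ℂ := Z.map (starRingEnd ℂ) with hZs
  set Ds : Matrix (Fin n) (Fin n) ℂ := D.map (starRingEnd ℂ) with hDs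
  set iI : Matrix (Fin n) (Fin n) ℂ := Complex.I • (1 : Matrix (Fin n) (Fin n) ℂ) with hiI
  have hiI2 : iI * iI = -1 := by
    rw [hiI, Matrix.smul_mul, Matrix.mul_smul, Matrix.one_mul, smul_smul, Complex.I_mul_I,
      neg_smul, one_smul]
  set P := Matrix.fromBlocks (1 : Matrix (Fin n) (Fin n) ℂ) iI iI
    (1 : Matrix (Fin n) (Fin n) ℂ) with hP
  set A := Matrix.fromBlocks ((-Complex.I) • Zs) W (-Ws) ((-Complex.I) • Z) with hA
  set L := Matrix.fromBlocks (1 : Matrix (Fin n) (Fin n) ℂ) (0 : Matrix (Fin n) (Fin n) ℂ)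
    (0 : Matrix (Fin n) (Fin n) ℂ) iI with hL
  set R := Matrix.fromBlocks (0 : Matrix (Fin n) (Fin n) ℂ) iI
    (1 : Matrix (Fin n) (Fin n) ℂ) (0 : Matrix (Fin n) (Fin n) ℂ) with hR
  set Dl := Matrix.fromBlocks D (0 : Matrix (Fin n) (Fin n) ℂ)
    (0 : Matrix (Fin n) (Fin n) ℂ) Ds with hDl
  set Dr := Matrix.fromBlocks Ds (0 : Matrix (Fin n) (Fin n) ℂ)
    (0 : Matrix (Fin n) (Fin n) ℂ) D with hDr
  -- key identity 1 : P * Jc * P = 2 • A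
  have key1 : P * Jc * P = (2 : ℂ) • A := by
    have hJcB : Jc = Matrix.fromBlocks (E.map (algebraMap ℝ ℂ)) (F.map (algebraMap ℝ ℂ))
        (M.map (algebraMap ℝ ℂ)) (N.map (algebraMap ℝ ℂ)) := by
      rw [hJc, hJ, Matrix.fromBlocks_map]
    rw [hJcB, hP, hA, Matrix.fromBlocks_multiply, Matrix.fromBlocks_multiply,
      Matrix.fromBlocks_smul]
    rw [Matrix.fromBlocks_inj]
    refine ⟨?_, ?_, ?_, ?_⟩ <;>
    · ext i j
      simp only [hiI, Matrix.smul_mul, Matrix.mul_smul, Matrix.one_mul, Matrix.mul_one,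
        Matrix.add_apply, Matrix.smul_apply, Matrix.map_apply, Matrix.neg_apply,
        smul_eq_mul, hE, hF, hM, hN, hZs, hWs, Complex.coe_algebraMap]
      simp only [Matrix.map, Matrix.of_apply]
      simp only [Complex.ext_iff, Complex.add_re, Complex.add_im, Complex.mul_re,
        Complex.mul_im, Complex.I_re, Complex.I_im, Complex.ofReal_re, Complex.ofReal_im,
        Complex.neg_re, Complex.neg_im, Complex.ofReal_sub, Complex.ofReal_add,
        Complex.ofReal_neg, Complex.sub_re, Complex.sub_im, RingHom.coe_coe,
        Complex.conj_re, Complex.conj_im, Complex.re_ofNat, Complex.im_ofNat]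
      constructor <;> ring
  -- key identity 2 : L * A * R = Dl * Y' * Dr
  have hDdiag : D = Matrix.diagonal fun i => (V i : ℂ) * Complex.exp (Complex.I * (θ i : ℂ)) :=
    hD
  have hY₂eq : Y₂ = Matrix.diagonal Y₂.diag := (hY₂diag.diagonal_diag).symm
  have key2 : L * A * R = Dl * Y' * Dr := by
    have lhs : L * A * R = Matrix.fromBlocks W Zs Z Ws := by
      rw [hL, hA, hR, Matrix.fromBlocks_multiply, Matrix.fromBlocks_multiply]
      rw [Matrix.fromBlocks_inj]
      refine ⟨?_, ?_, ?_, ?_⟩ <;>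
      · simp [hiI, Matrix.smul_mul, Matrix.mul_smul, smul_smul, Complex.I_mul_I]
    have b11 : D * Y₁.map (starRingEnd ℂ) * Ds = W := hW.symm
    have b22 : Ds * Y₁ * D = Ws := by
      rw [hWs, hW, Matrix.map_mul, Matrix.map_mul, hDs]
      congr 1
      · congr 1
        ext i j
        simp [Matrix.map_apply]
      · ext i j
        simp [Matrix.map_apply]
    have b21 : Ds * (Y₂ * T) * Ds = Z := by
      rw [hDs, hDdiag, hZ, hT, hY₂eq,
        Matrix.diagonal_map (map_zero _), Matrix.diagonal_mul_diagonal,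
        Matrix.diagonal_mul_diagonal, Matrix.diagonal_mul_diagonal]
      refine Matrix.diagonal_eq_diagonal_iff.mpr fun i => ?_
      simpa [Matrix.diag, _root_.map_mul] using conj_sandwich_scalar (V i) (θ i) (Y₂ i i)
    have b12 : D * ((Y₂ * T).map (starRingEnd ℂ)) * D = Zs := by
      rw [hZs, hDdiag, hZ, hT, hY₂eq, Matrix.diagonal_mul_diagonal,
        Matrix.diagonal_map (map_zero _), Matrix.diagonal_map (map_zero _),
        Matrix.diagonal_mul_diagonal, Matrix.diagonal_mul_diagonal]
      refine Matrix.diagonal_eq_diagonal_iff.mpr fun i => ?_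
      simpa [Matrix.diag, _root_.map_mul] using sandwich_conj_scalar (V i) (θ i) (Y₂ i i)
    have rhs : Dl * Y' * Dr = Matrix.fromBlocks W Zs Z Ws := by
      rw [hDl, hY', hDr, Matrix.fromBlocks_multiply, Matrix.fromBlocks_multiply]
      simp only [Matrix.zero_mul, Matrix.mul_zero, add_zero, zero_add]
      rw [Matrix.fromBlocks_inj]
      exact ⟨b11, b12, b21, b22⟩
    rw [lhs, rhs]
  -- determinants of the auxiliary matrices are nonzero
  have hPdet : P.det ≠ 0 := by
    have hmul : P * Matrix.fromBlocks (1 : Matrix (Fin n) (Fin n) ℂ) (-iI) (-iI)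
        (1 : Matrix (Fin n) (Fin n) ℂ) = (2 : ℂ) • 1 := by
      rw [hP, Matrix.fromBlocks_multiply,
        show (1 : Matrix (Fin n ⊕ Fin n) (Fin n ⊕ Fin n) ℂ) =
          Matrix.fromBlocks 1 0 0 1 from Matrix.fromBlocks_one.symm,
        Matrix.fromBlocks_smul, Matrix.fromBlocks_inj]
      refine ⟨?_, ?_, ?_, ?_⟩ <;>
        simp [Matrix.mul_neg, hiI2, two_smul]
    intro h
    have h2 := congrArg Matrix.det hmul
    rw [Matrix.det_mul, h, zero_mul, Matrix.det_smul, Matrix.det_one, mul_one] at h2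
    exact (pow_ne_zero _ (two_ne_zero)) h2.symm
  have hLdet : L.det ≠ 0 := by
    have hmul : L * Matrix.fromBlocks (1 : Matrix (Fin n) (Fin n) ℂ)
        (0 : Matrix (Fin n) (Fin n) ℂ) (0 : Matrix (Fin n) (Fin n) ℂ) (-iI) = 1 := by
      rw [hL, Matrix.fromBlocks_multiply,
        show (1 : Matrix (Fin n ⊕ Fin n) (Fin n ⊕ Fin n) ℂ) =
          Matrix.fromBlocks 1 0 0 1 from Matrix.fromBlocks_one.symm,
        Matrix.fromBlocks_inj]
      refine ⟨?_, ?_, ?_, ?_⟩ <;>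
        simp [Matrix.mul_neg, hiI2]
    intro h
    have h2 := congrArg Matrix.det hmul
    rw [Matrix.det_mul, h, zero_mul, Matrix.det_one] at h2
    exact one_ne_zero h2.symm
  have hRdet : R.det ≠ 0 := by
    have hmul : R * Matrix.fromBlocks (0 : Matrix (Fin n) (Fin n) ℂ)
        (1 : Matrix (Fin n) (Fin n) ℂ) (-iI) (0 : Matrix (Fin n) (Fin n) ℂ) = 1 := by
      rw [hR, Matrix.fromBlocks_multiply,
        show (1 : Matrix (Fin n ⊕ Fin n) (Fin n ⊕ Fin n) ℂ) =
          Matrix.fromBlocks 1 0 0 1 from Matrix.fromBlocks_one.symm,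
        Matrix.fromBlocks_inj]
      refine ⟨?_, ?_, ?_, ?_⟩ <;>
        simp [Matrix.mul_neg, hiI2]
    intro h
    have h2 := congrArg Matrix.det hmul
    rw [Matrix.det_mul, h, zero_mul, Matrix.det_one] at h2
    exact one_ne_zero h2.symm
  have hDdet : D.det ≠ 0 := by
    rw [hDdiag, Matrix.det_diagonal]
    exact Finset.prod_ne_zero_iff.mpr fun i _ =>
      mul_ne_zero (Complex.ofReal_ne_zero.mpr (hV i)) (Complex.exp_ne_zero _)
  have hDsdet : Ds.det ≠ 0 := by
    rw [hDs, hDdiag, Matrix.diagonal_map (map_zero _), Matrix.det_diagonal]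
    refine Finset.prod_ne_zero_iff.mpr fun i _ => ?_
    simp only [_root_.map_mul]
    exact mul_ne_zero (by simp [Complex.conj_ofReal, Complex.ofReal_ne_zero, hV i])
      (by simp [← Complex.exp_conj, Complex.exp_ne_zero])
  have hDldet : Dl.det ≠ 0 := by
    rw [hDl, Matrix.det_fromBlocks_zero₂₁]
    exact mul_ne_zero hDdet hDsdet
  have hDrdet : Dr.det ≠ 0 := by
    rw [hDr, Matrix.det_fromBlocks_zero₂₁]
    exact mul_ne_zero hDsdet hDdet
  -- chain of equivalences
  have e1 : Jc.det = 0 ↔ A.det = 0 := by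
    rw [← det_sandwich_zero_iff P P Jc hPdet hPdet, key1, Matrix.det_smul]
    simp [pow_ne_zero, (two_ne_zero : (2:ℂ) ≠ 0)]
  have e2 : A.det = 0 ↔ Y'.det = 0 := by
    rw [← det_sandwich_zero_iff L R A hLdet hRdet, key2,
      det_sandwich_zero_iff Dl Dr Y' hDldet hDrdet]
  rw [step0, e1, e2]
end

section
/- Suppose V_i ≠ 0 for every i. If det J = 0 (i.e., the system state lies on the impasse surface), then there exists a nonzero vector x ∈ ℂⁿ such that ‖Y₁·x‖ ≤ m·‖x‖, where m = max_{1≤i≤n} |(Y₂)_{ii}|. (Equivalently, the minimum singular value of Y₁ is at most the maximum modulus of the diagonal entries of Y₂, which is Theorem 1 of the paper: a trajectory can hit the impasse surface only if σ_min(Y₁) ≤ max_i |(1−α_i/2)Gᵢ + i(1−β_i/2)Bᵢ|.) -/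
/-- The Euclidean norm on `ℂⁿ`. -/
noncomputable def euclNorm {k : ℕ} (v : Fin k → ℂ) : ℝ :=
  Real.sqrt (∑ i, ‖v i‖ ^ 2)

/- Theorem 1: if the trajectory hits the impasse surface (the algebraic Jacobian `J`
is singular) and all voltages are nonzero, then the minimum singular value of `Y₁`
is at most `max_i |(Y₂)_{ii}|`, i.e. there is a nonzero `x` with
`‖Y₁ x‖ ≤ (max_i |(Y₂)_{ii}|) ‖x‖`. -/
theorem impasse_necessary_condition
    (n : ℕ) (hn : 1 ≤ n)
    (Y₁ Y₂ : Matrix (Fin n) (Fin n) ℂ) (hY₂diag : Y₂.IsDiag)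
    (θ V : Fin n → ℝ) (hV : ∀ i, V i ≠ 0)
    (D W Z : Matrix (Fin n) (Fin n) ℂ)
    (hD : D = Matrix.diagonal fun i => (V i : ℂ) * Complex.exp (Complex.I * (θ i : ℂ)))
    (hW : W = D * Y₁.map (starRingEnd ℂ) * D.map (starRingEnd ℂ))
    (hZ : Z = Matrix.diagonal fun i => Y₂ i i * (V i : ℂ) ^ 2)
    (E F M N : Matrix (Fin n) (Fin n) ℝ)
    (hE : E = fun i j => (W i j).im - (Z i j).im)
    (hF : F = fun i j => (W i j).re - (Z i j).re)
    (hM : M = fun i j => -(W i j).re - (Z i j).re)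
    (hN : N = fun i j => (W i j).im + (Z i j).im)
    (J : Matrix (Fin n ⊕ Fin n) (Fin n ⊕ Fin n) ℝ)
    (hJ : J = Matrix.fromBlocks E F M N)
    (hsing : J.det = 0) :
    ∃ x : Fin n → ℂ, x ≠ 0 ∧
      euclNorm (Y₁.mulVec x) ≤
        (Finset.univ.sup' ⟨⟨0, hn⟩, Finset.mem_univ _⟩ fun i => ‖Y₂ i i‖) *
          euclNorm x := by
  classical
  obtain ⟨w, hw0, hww⟩ := Matrix.exists_mulVec_eq_zero_iff.mpr hsing
  set u : Fin n → ℝ := fun j => w (Sum.inl j) with hu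
  set v : Fin n → ℝ := fun j => w (Sum.inr j) with hv
  set c : Fin n → ℂ := fun j => ⟨v j, -u j⟩ with hc
  -- the diagonal entries of D
  set d : Fin n → ℂ := fun i => (V i : ℂ) * Complex.exp (Complex.I * (θ i : ℂ)) with hd
  have hdne : ∀ i, d i ≠ 0 := by
    intro i
    exact mul_ne_zero (by exact_mod_cast hV i) (Complex.exp_ne_zero _)
  have hdabs : ∀ i, ‖d i‖ = |V i| := by
    intro i
    rw [hd]
    simp only [norm_mul, Complex.norm_real, Real.norm_eq_abs]
    rw [mul_comm Complex.I ((θ i : ℂ)), Complex.norm_exp_ofReal_mul_I, mul_one]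
  -- the candidate vector
  set x : Fin n → ℂ := fun k => d k * (starRingEnd ℂ) (c k) with hx
  -- c is nonzero
  have hcne : c ≠ 0 := by
    intro h
    apply hw0
    funext s
    cases s with
    | inl j =>
      have := congrFun h j
      have him := congrArg Complex.im this
      simpa [hc] using him
    | inr j =>
      have := congrFun h j
      have hre := congrArg Complex.re this
      simpa [hc] using hre
  -- the two block equations
  have heq1 : ∀ j, (∑ k, E j k * u k) + (∑ k, F j k * v k) = 0 := by
    intro j
    have := congrFun hww (Sum.inl j)
    rw [hJ] at this
    simpa [Matrix.mulVec, dotProduct, Fintype.sum_sum_type] using this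
  have heq2 : ∀ j, (∑ k, M j k * u k) + (∑ k, N j k * v k) = 0 := by
    intro j
    have := congrFun hww (Sum.inr j)
    rw [hJ] at this
    simpa [Matrix.mulVec, dotProduct, Fintype.sum_sum_type] using this
  -- key identity : W c = conj (Z c) componentwise
  have key : ∀ j, W.mulVec c j = (starRingEnd ℂ) (Z.mulVec c j) := by
    intro j
    have hWre : (W.mulVec c j).re = ∑ k, ((W j k).re * v k + (W j k).im * u k) := by
      simp only [Matrix.mulVec, dotProduct, Complex.re_sum, Complex.mul_re, hc]
      apply Finset.sum_congr rfl
      intro k _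
      ring
    have hWim : (W.mulVec c j).im = ∑ k, ((W j k).im * v k - (W j k).re * u k) := by
      simp only [Matrix.mulVec, dotProduct, Complex.im_sum, Complex.mul_im, hc]
      apply Finset.sum_congr rfl
      intro k _
      ring
    have hZre : (Z.mulVec c j).re = ∑ k, ((Z j k).re * v k + (Z j k).im * u k) := by
      simp only [Matrix.mulVec, dotProduct, Complex.re_sum, Complex.mul_re, hc]
      apply Finset.sum_congr rfl
      intro k _
      ring
    have hZim : (Z.mulVec c j).im = ∑ k, ((Z j k).im * v k - (Z j k).re * u k) := by
      simp only [Matrix.mulVec, dotProduct, Complex.im_sum, Complex.mul_im, hc]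
      apply Finset.sum_congr rfl
      intro k _
      ring
    apply Complex.ext
    · -- real parts equal
      rw [Complex.conj_re, hWre, hZre]
      have h1 := heq1 j
      rw [hE, hF] at h1
      have hsum : (∑ k, ((W j k).re * v k + (W j k).im * u k))
          - (∑ k, ((Z j k).re * v k + (Z j k).im * u k))
          = (∑ k, ((W j k).im - (Z j k).im) * u k)
            + (∑ k, ((W j k).re - (Z j k).re) * v k) := by
        rw [← Finset.sum_sub_distrib, ← Finset.sum_add_distrib]
        apply Finset.sum_congr rfl
        intro k _
        ring
      have := hsum.trans h1
      linarith [this]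
    · -- imaginary parts: (Wc).im = -(Zc).im
      rw [Complex.conj_im, hWim, hZim]
      have h2 := heq2 j
      rw [hM, hN] at h2
      have hsum : (∑ k, ((W j k).im * v k - (W j k).re * u k))
          + (∑ k, ((Z j k).im * v k - (Z j k).re * u k))
          = (∑ k, (-(W j k).re - (Z j k).re) * u k)
            + (∑ k, ((W j k).im + (Z j k).im) * v k) := by
        rw [← Finset.sum_add_distrib, ← Finset.sum_add_distrib]
        apply Finset.sum_congr rfl
        intro k _
        ring
      have := hsum.trans h2
      linarith [this]
  -- express W c in terms of Y₁ x
  have hWx : ∀ j, W.mulVec c j = d j * (starRingEnd ℂ) (Y₁.mulVec x j) := by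
    intro j
    rw [hW, hD]
    have hmap : (Matrix.diagonal d).map (starRingEnd ℂ)
        = Matrix.diagonal fun m => (starRingEnd ℂ) (d m) :=
      Matrix.diagonal_map (map_zero _)
    have hWent : ∀ k, (Matrix.diagonal d * Y₁.map (starRingEnd ℂ) *
        (Matrix.diagonal d).map (starRingEnd ℂ)) j k
        = d j * (starRingEnd ℂ) (Y₁ j k) * (starRingEnd ℂ) (d k) := by
      intro k
      rw [hmap, Matrix.mul_diagonal, Matrix.diagonal_mul, Matrix.map_apply]
    simp only [Matrix.mulVec, dotProduct]
    rw [map_sum, Finset.mul_sum]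
    apply Finset.sum_congr rfl
    intro k _
    rw [hWent k]
    have hxk : x k = d k * (starRingEnd ℂ) (c k) := rfl
    rw [hxk]
    simp only [map_mul, Complex.conj_conj]
    ring
  -- Z c componentwise
  have hZc : ∀ j, Z.mulVec c j = Y₂ j j * (V j : ℂ) ^ 2 * c j := by
    intro j
    rw [hZ]
    exact Matrix.mulVec_diagonal _ _ _
  -- pointwise modulus identity
  have habs : ∀ j, ‖Y₁.mulVec x j‖ = ‖Y₂ j j‖ * ‖x j‖ := by
    intro j
    have h := (key j).symm.trans (hWx j)
    have habs' := congrArg (‖·‖) h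
    rw [hZc j] at habs'
    simp only [norm_mul, Complex.norm_conj, Complex.norm_real, Real.norm_eq_abs] at habs'
    rw [hdabs j] at habs'
    -- habs' : |Y₂ j j| * |V j|^2 * |c j| = |V j| * |Y₁x j|
    have hxabs : ‖x j‖ = |V j| * ‖c j‖ := by
      rw [hx]
      simp only [norm_mul, Complex.norm_conj]
      rw [hdabs j]
    have hVne : |V j| ≠ 0 := abs_ne_zero.mpr (hV j)
    apply mul_left_cancel₀ hVne
    rw [← habs', hxabs]
    simp only [norm_pow, Complex.norm_real, Real.norm_eq_abs]
    ring
  -- x is nonzero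
  have hxne : x ≠ 0 := by
    intro h
    apply hcne
    funext j
    have := congrFun h j
    rw [hx] at this
    simp only [Pi.zero_apply, mul_eq_zero] at this
    rcases this with h1 | h1
    · exact absurd h1 (hdne j)
    · simpa using congrArg (starRingEnd ℂ) h1
  -- conclude
  refine ⟨x, hxne, ?_⟩
  set m : ℝ := Finset.univ.sup' ⟨⟨0, hn⟩, Finset.mem_univ _⟩ fun i => ‖Y₂ i i‖
    with hm
  have hmle : ∀ j, ‖Y₂ j j‖ ≤ m := fun j => by
    rw [hm]
    exact Finset.le_sup' (fun i => ‖Y₂ i i‖) (Finset.mem_univ j)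
  have hm0 : 0 ≤ m := le_trans (norm_nonneg _) (hmle ⟨0, hn⟩)
  have hsumle : (∑ i, ‖Y₁.mulVec x i‖ ^ 2) ≤ m ^ 2 * ∑ i, ‖x i‖ ^ 2 := by
    rw [Finset.mul_sum]
    apply Finset.sum_le_sum
    intro i _
    rw [habs i, mul_pow]
    have h1 : ‖Y₂ i i‖ ^ 2 ≤ m ^ 2 :=
      pow_le_pow_left₀ (norm_nonneg _) (hmle i) 2
    exact mul_le_mul_of_nonneg_right h1 (sq_nonneg _)
  unfold euclNorm
  calc Real.sqrt (∑ i, ‖Y₁.mulVec x i‖ ^ 2)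
      ≤ Real.sqrt (m ^ 2 * ∑ i, ‖x i‖ ^ 2) := Real.sqrt_le_sqrt hsumle
    _ = m * Real.sqrt (∑ i, ‖x i‖ ^ 2) := by
        rw [Real.sqrt_mul (sq_nonneg m), Real.sqrt_sq hm0]
end

section
/- Suppose there exists a real constant c such that |(Y₂)_{ii}| < c for every i and ‖Y₁·x‖ ≥ c·‖x‖ for every x ∈ ℂⁿ. Then the complex 2n×2n block matrix Y′ = [[conj(Y₁), conj(Y₂·T)], [Y₂·T, Y₁]] is nonsingular (det Y′ ≠ 0). -/
lemma euclNorm_nonneg {k : ℕ} (v : Fin k → ℂ) : 0 ≤ euclNorm v :=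
  Real.sqrt_nonneg _

lemma euclNorm_eq_zero {k : ℕ} {v : Fin k → ℂ} (h : euclNorm v ≤ 0) : v = 0 := by
  have hs : ∀ i ∈ Finset.univ, (0:ℝ) ≤ ‖v i‖ ^ 2 := fun i _ => sq_nonneg _
  have hnn : (0:ℝ) ≤ ∑ i, ‖v i‖ ^ 2 := Finset.sum_nonneg hs
  have h0 : euclNorm v = 0 := le_antisymm h (euclNorm_nonneg v)
  have hsum : ∑ i, ‖v i‖ ^ 2 = 0 := by
    have := (Real.sqrt_eq_zero hnn).mp h0
    exact this
  funext i
  have := (Finset.sum_eq_zero_iff_of_nonneg hs).mp hsum i (Finset.mem_univ i)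
  have : ‖v i‖ = 0 := by
    have := sq_eq_zero_iff.mp this
    exact this
  simpa using (norm_eq_zero.mp this)

lemma euclNorm_neg {k : ℕ} (v : Fin k → ℂ) : euclNorm (-v) = euclNorm v := by
  unfold euclNorm
  simp

lemma euclNorm_star {k : ℕ} (v : Fin k → ℂ) :
    euclNorm (fun i => (starRingEnd ℂ) (v i)) = euclNorm v := by
  unfold euclNorm
  simp

lemma euclNorm_diag_mulVec_le {k : ℕ} (d : Fin k → ℂ) (s : ℝ) (hs : 0 ≤ s)
    (hd : ∀ i, ‖d i‖ ≤ s) (v : Fin k → ℂ) :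
    euclNorm ((Matrix.diagonal d).mulVec v) ≤ s * euclNorm v := by
  unfold euclNorm
  rw [← Real.sqrt_sq hs, ← Real.sqrt_mul (sq_nonneg s)]
  apply Real.sqrt_le_sqrt
  rw [Finset.mul_sum]
  apply Finset.sum_le_sum
  intro i _
  rw [Matrix.mulVec_diagonal, norm_mul, mul_pow]
  have h1 : ‖d i‖ ^ 2 ≤ s ^ 2 :=
    pow_le_pow_left₀ (norm_nonneg _) (hd i) 2
  exact mul_le_mul_of_nonneg_right h1 (sq_nonneg _)

lemma mulVec_map_star {k : ℕ} (A : Matrix (Fin k) (Fin k) ℂ) (v : Fin k → ℂ) :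
    (A.map (starRingEnd ℂ)).mulVec v =
      fun i => (starRingEnd ℂ) ((A.mulVec fun j => (starRingEnd ℂ) (v j)) i) := by
  funext i
  simp [Matrix.mulVec, dotProduct, Matrix.map_apply, map_sum, map_mul]

/- Key step in the proof of Theorem 1: if `σ_min(Y₁) ≥ c > |(Y₂)_{ii}|` for all `i`,
then the block matrix `Y′ = [[conj Y₁, conj (Y₂ T)], [Y₂ T, Y₁]]` is nonsingular. -/
theorem Yprime_nonsingular_of_sigma_min_gt
    (n : ℕ) (hn : 1 ≤ n)
    (Y₁ Y₂ : Matrix (Fin n) (Fin n) ℂ) (hY₂diag : Y₂.IsDiag)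
    (θ : Fin n → ℝ)
    (c : ℝ)
    (hc : ∀ i, ‖Y₂ i i‖ < c)
    (hY₁ : ∀ x : Fin n → ℂ, c * euclNorm x ≤ euclNorm (Y₁.mulVec x))
    (T : Matrix (Fin n) (Fin n) ℂ)
    (hT : T = Matrix.diagonal fun i => Complex.exp (2 * Complex.I * (θ i : ℂ)))
    (Y' : Matrix (Fin n ⊕ Fin n) (Fin n ⊕ Fin n) ℂ)
    (hY' : Y' = Matrix.fromBlocks (Y₁.map (starRingEnd ℂ)) ((Y₂ * T).map (starRingEnd ℂ))
      (Y₂ * T) Y₁) :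
    Y'.det ≠ 0 := by
  intro hdet
  obtain ⟨v, hv0, hv⟩ := Matrix.exists_mulVec_eq_zero_iff.mpr hdet
  set x : Fin n → ℂ := fun i => v (Sum.inl i) with hx
  set y : Fin n → ℂ := fun i => v (Sum.inr i) with hy
  -- positivity of c
  have i0 : Fin n := ⟨0, hn⟩
  have hc0 : 0 < c := lt_of_le_of_lt (norm_nonneg (Y₂ i0 i0)) (hc i0)
  -- bound s
  have hne : (Finset.univ : Finset (Fin n)).Nonempty := ⟨i0, Finset.mem_univ _⟩
  set s : ℝ := Finset.univ.sup' hne (fun i => ‖Y₂ i i‖) with hsdef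
  have hs0 : 0 ≤ s :=
    le_trans (norm_nonneg (Y₂ i0 i0))
      (Finset.le_sup' (fun i => ‖Y₂ i i‖) (Finset.mem_univ i0))
  have hsc : s < c := (Finset.sup'_lt_iff hne).mpr fun i _ => hc i
  -- Y₂ * T is diagonal
  set d : Fin n → ℂ := fun i => Y₂ i i * Complex.exp (2 * Complex.I * (θ i : ℂ)) with hd
  have hYT : Y₂ * T = Matrix.diagonal d := by
    funext i j
    by_cases hij : i = j
    · subst hij
      simp [hT, Matrix.mul_diagonal, hd]
    · simp [hT, Matrix.mul_diagonal, Matrix.diagonal_apply_ne _ hij, hY₂diag hij]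
  have hdabs : ∀ i, ‖d i‖ ≤ s := by
    intro i
    have he : ‖Complex.exp (2 * Complex.I * (θ i : ℂ))‖ = 1 := by
      have : 2 * Complex.I * (θ i : ℂ) = ((2 * θ i : ℝ) : ℂ) * Complex.I := by
        push_cast; ring
      rw [this, Complex.norm_exp_ofReal_mul_I]
    rw [hd]
    simp only [norm_mul, he, mul_one]
    exact Finset.le_sup' (fun i => ‖Y₂ i i‖) (Finset.mem_univ i)
  have hdiagbound : ∀ w : Fin n → ℂ, euclNorm ((Y₂ * T).mulVec w) ≤ s * euclNorm w := by
    intro w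
    rw [hYT]
    exact euclNorm_diag_mulVec_le d s hs0 hdabs w
  -- block equations
  have hvelim : v = Sum.elim x y := by
    funext i; cases i <;> rfl
  rw [hY', hvelim, Matrix.fromBlocks_mulVec] at hv
  have h1 : (Y₁.map (starRingEnd ℂ)).mulVec x +
      ((Y₂ * T).map (starRingEnd ℂ)).mulVec y = 0 := by
    funext i; exact congrFun hv (Sum.inl i)
  have h2 : (Y₂ * T).mulVec x + Y₁.mulVec y = 0 := by
    funext i; exact congrFun hv (Sum.inr i)
  -- from h2 : c‖y‖ ≤ s‖x‖
  have hY1y : Y₁.mulVec y = -((Y₂ * T).mulVec x) := eq_neg_of_add_eq_zero_right h2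
  have hbound1 : c * euclNorm y ≤ s * euclNorm x := by
    calc c * euclNorm y ≤ euclNorm (Y₁.mulVec y) := hY₁ y
      _ = euclNorm ((Y₂ * T).mulVec x) := by rw [hY1y, euclNorm_neg]
      _ ≤ s * euclNorm x := hdiagbound x
  -- from h1 : c‖x‖ ≤ s‖y‖
  have h1' : Y₁.mulVec (fun j => (starRingEnd ℂ) (x j)) +
      (Y₂ * T).mulVec (fun j => (starRingEnd ℂ) (y j)) = 0 := by
    funext i
    have h := congrFun h1 i
    simp only [Pi.add_apply, Pi.zero_apply] at h ⊢
    have e1 := congrFun (mulVec_map_star Y₁ x) i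
    have e2 := congrFun (mulVec_map_star (Y₂ * T) y) i
    rw [e1, e2, ← map_add] at h
    have h' := congrArg (starRingEnd ℂ) h
    simpa using h'
  have hY1x : Y₁.mulVec (fun j => (starRingEnd ℂ) (x j)) =
      -((Y₂ * T).mulVec (fun j => (starRingEnd ℂ) (y j))) :=
    eq_neg_of_add_eq_zero_left h1'
  have hbound2 : c * euclNorm x ≤ s * euclNorm y := by
    calc c * euclNorm x = c * euclNorm (fun j => (starRingEnd ℂ) (x j)) := by
          rw [euclNorm_star]
      _ ≤ euclNorm (Y₁.mulVec (fun j => (starRingEnd ℂ) (x j))) := hY₁ _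
      _ = euclNorm ((Y₂ * T).mulVec (fun j => (starRingEnd ℂ) (y j))) := by
          rw [hY1x, euclNorm_neg]
      _ ≤ s * euclNorm (fun j => (starRingEnd ℂ) (y j)) := hdiagbound _
      _ = s * euclNorm y := by rw [euclNorm_star]
  -- conclude x = 0, y = 0
  have hxnn := euclNorm_nonneg x
  have hynn := euclNorm_nonneg y
  have hx0 : euclNorm x ≤ 0 := by nlinarith
  have hy0 : euclNorm y ≤ 0 := by nlinarith
  apply hv0
  have hxz : x = 0 := euclNorm_eq_zero hx0
  have hyz : y = 0 := euclNorm_eq_zero hy0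
  rw [hvelim, hxz, hyz]
  funext i; cases i <;> rfl
end

section
/- For every θ : {1,…,n} → ℝ, writing T = diag(exp(2i·θ_i)), the complex 2n×2n block matrix Y′ = [[conj(Y₁), conj(Y₂·T)], [Y₂·T, Y₁]] is nonsingular (det Y′ ≠ 0). -/
open Complex Finset in
lemma key_lemma
    (n : ℕ) (Vt : Finset (Fin n)) (hVt : Vt.Nonempty)
    (B : Matrix (Fin n) (Fin n) ℝ) (hBsym : B.IsSymm)
    (hBoff : ∀ i j, i ≠ j → 0 ≤ B i j)
    (hBdiag : ∀ i, B i i = -∑ j ∈ Finset.univ.erase i, B i j)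
    (hBconn : ∀ S : Finset (Fin n), S.Nonempty → S ≠ Finset.univ →
      ∃ i ∈ S, ∃ j ∉ S, 0 < B i j)
    (h b β : Fin n → ℝ)
    (hh : ∀ i ∈ Vt, h i < 0) (hh0 : ∀ i ∉ Vt, h i = 0)
    (hb : ∀ i, b i ≤ 0) (hβ : ∀ i, 1 ≤ β i)
    (a : Fin n → ℂ) (ha : ∀ i, (a i).im = h i + β i * b i / 2)
    (d : Fin n → ℂ) (hd : ∀ i, ‖d i‖ ≤ -(β i * b i / 2))
    (x : Fin n → ℂ)
    (heq : ∀ i, Complex.I * (∑ j, (B i j : ℂ) * x j) + a i * x i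
      = d i * (starRingEnd ℂ) (x i)) :
    ∀ i, x i = 0 := by
  have hrow : ∀ i, ∑ j, (B i j : ℂ) = 0 := by
    intro i
    have := Finset.add_sum_erase Finset.univ (fun j => (B i j : ℂ)) (Finset.mem_univ i)
    rw [← this]
    skip
    rw [show ((B i i : ℂ)) = ((B i i : ℝ) : ℂ) from rfl, hBdiag i]
    push_cast
    ring
  set cx : Fin n → ℂ := fun i => (starRingEnd ℂ) (x i) with hcx
  set Q : ℂ := ∑ i, ∑ j, (B i j : ℂ) * (cx i * x j) with hQdef
  set R : ℝ := ∑ i, ∑ j, B i j * Complex.normSq (x i - x j) with hRdef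
  have e1 : ∑ i, ∑ j, (B i j : ℂ) * (x i * cx i) = 0 := by
    apply Finset.sum_eq_zero
    intro i _
    rw [← Finset.sum_mul, hrow i, zero_mul]
  have e2 : ∑ i, ∑ j, (B i j : ℂ) * (x j * cx j) = 0 := by
    rw [Finset.sum_comm]
    apply Finset.sum_eq_zero
    intro j _
    have : ∀ i, (B i j : ℂ) = (B j i : ℂ) := fun i => by rw [hBsym.apply j i]
    calc ∑ i, (B i j : ℂ) * (x j * cx j) = (∑ i, (B j i : ℂ)) * (x j * cx j) := by
          rw [Finset.sum_mul]; exact Finset.sum_congr rfl fun i _ => by rw [this i]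
      _ = 0 := by rw [hrow j, zero_mul]
  have e3 : ∑ i, ∑ j, (B i j : ℂ) * (x i * cx j) = Q := by
    rw [Finset.sum_comm, hQdef]
    apply Finset.sum_congr rfl
    intro j _
    apply Finset.sum_congr rfl
    intro i _
    rw [hBsym.apply j i]  -- B i j = B j i? hBsym.apply j i : B i j = B j i
    ring
  have e4 : ∑ i, ∑ j, (B i j : ℂ) * (x j * cx i) = Q := by
    rw [hQdef]
    exact Finset.sum_congr rfl fun i _ => Finset.sum_congr rfl fun j _ => by ring
  have hRQ : (R : ℂ) = -(2 * Q) := by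
    have expand : (R : ℂ) = ∑ i, ∑ j, (B i j : ℂ) * ((x i - x j) * (cx i - cx j)) := by
      rw [hRdef]
      push_cast
      apply Finset.sum_congr rfl
      intro i _
      apply Finset.sum_congr rfl
      intro j _
      rw [show ((Complex.normSq (x i - x j) : ℝ) : ℂ) = (x i - x j) * (starRingEnd ℂ) (x i - x j) from (Complex.mul_conj _).symm]
      simp only [hcx, map_sub]
    rw [expand]
    calc ∑ i, ∑ j, (B i j : ℂ) * ((x i - x j) * (cx i - cx j))
        = ∑ i, ∑ j, ((B i j : ℂ) * (x i * cx i) + (B i j : ℂ) * (x j * cx j)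
            - (B i j : ℂ) * (x i * cx j) - (B i j : ℂ) * (x j * cx i)) := by
          exact Finset.sum_congr rfl fun i _ => Finset.sum_congr rfl fun j _ => by ring
      _ = -(2 * Q) := by
          simp only [Finset.sum_sub_distrib, Finset.sum_add_distrib, e1, e2, e3, e4]
          ring
  have hS0 : ∑ i, cx i * (Complex.I * (∑ j, (B i j : ℂ) * x j) + a i * x i)
      = ∑ i, cx i * (d i * cx i) :=
    Finset.sum_congr rfl fun i _ => by rw [heq i]
  have lhs_eq : ∑ i, cx i * (Complex.I * (∑ j, (B i j : ℂ) * x j) + a i * x i)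
      = Complex.I * Q + ∑ i, a i * (x i * cx i) := by
    rw [hQdef, Finset.mul_sum, ← Finset.sum_add_distrib]
    apply Finset.sum_congr rfl
    intro i _
    have hpull : ∑ j, (B i j : ℂ) * (cx i * x j) = cx i * ∑ j, (B i j : ℂ) * x j := by
      rw [Finset.mul_sum]
      exact Finset.sum_congr rfl fun j _ => by ring
    rw [hpull]
    ring
  have hQval : Q = ((-(R/2) : ℝ) : ℂ) := by
    push_cast
    linear_combination hRQ / 2
  have him_lhs : (Complex.I * Q + ∑ i, a i * (x i * cx i)).im
      = -(R/2) + ∑ i, (h i + β i * b i / 2) * Complex.normSq (x i) := by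
    rw [hQval, Complex.add_im, Complex.mul_im]
    simp only [Complex.I_re, Complex.I_im, Complex.ofReal_re, Complex.ofReal_im,
      zero_mul, one_mul, add_zero]
    congr 1
    · norm_num
    rw [Complex.im_sum]
    apply Finset.sum_congr rfl
    intro i _
    rw [show x i * cx i = ((Complex.normSq (x i) : ℝ) : ℂ) from Complex.mul_conj (x i),
      Complex.mul_im]
    simp [ha i]
  have him_rhs : ∀ i, (β i * b i / 2) * Complex.normSq (x i) ≤ (cx i * (d i * cx i)).im := by
    intro i
    have h1 : -‖cx i * (d i * cx i)‖ ≤ (cx i * (d i * cx i)).im := by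
      have h2 := Complex.abs_im_le_norm (cx i * (d i * cx i))
      have h3 := neg_abs_le ((cx i * (d i * cx i)).im)
      linarith
    have habs : ‖cx i * (d i * cx i)‖ = ‖d i‖ * Complex.normSq (x i) := by
      rw [norm_mul, norm_mul, Complex.normSq_eq_norm_sq]
      simp only [hcx, Complex.norm_conj]
      ring
    have hns : 0 ≤ Complex.normSq (x i) := Complex.normSq_nonneg _
    nlinarith [hd i, h1, Complex.abs_im_le_norm (cx i * (d i * cx i))]
  have hmain : -(R/2) + ∑ i, (h i + β i * b i / 2) * Complex.normSq (x i)
      ≥ ∑ i, (β i * b i / 2) * Complex.normSq (x i) := by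
    rw [← him_lhs]
    rw [lhs_eq] at hS0
    rw [hS0, Complex.im_sum]
    exact Finset.sum_le_sum fun i _ => him_rhs i
  have hsplit : ∑ i, (h i + β i * b i / 2) * Complex.normSq (x i)
      = ∑ i, h i * Complex.normSq (x i) + ∑ i, (β i * b i / 2) * Complex.normSq (x i) := by
    rw [← Finset.sum_add_distrib]
    exact Finset.sum_congr rfl fun i _ => by ring
  have hineq : R / 2 + ∑ i, (-(h i)) * Complex.normSq (x i) ≤ 0 := by
    rw [hsplit] at hmain
    have : ∑ i, (-(h i)) * Complex.normSq (x i) = -∑ i, h i * Complex.normSq (x i) := by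
      rw [← Finset.sum_neg_distrib]
      exact Finset.sum_congr rfl fun i _ => by ring
    rw [this]
    linarith
  have hRterm : ∀ i ∈ Finset.univ, (0:ℝ) ≤ ∑ j, B i j * Complex.normSq (x i - x j) := by
    intro i _
    apply Finset.sum_nonneg
    intro j _
    by_cases hij : i = j
    · simp [hij]
    · exact mul_nonneg (hBoff i j hij) (Complex.normSq_nonneg _)
  have hRnn : 0 ≤ R := Finset.sum_nonneg hRterm
  have hhterm : ∀ i ∈ Finset.univ, (0:ℝ) ≤ (-(h i)) * Complex.normSq (x i) := by
    intro i _
    apply mul_nonneg _ (Complex.normSq_nonneg _)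
    by_cases hi : i ∈ Vt
    · linarith [hh i hi]
    · rw [hh0 i hi]; simp
  have hhsum_nn : 0 ≤ ∑ i, (-(h i)) * Complex.normSq (x i) := Finset.sum_nonneg hhterm
  have hR0 : R = 0 := by linarith
  have hhsum0 : ∑ i, (-(h i)) * Complex.normSq (x i) = 0 := by linarith
  -- x vanishes on Vt
  have hxVt : ∀ i ∈ Vt, x i = 0 := by
    intro i hi
    have := (Finset.sum_eq_zero_iff_of_nonneg hhterm).mp hhsum0 i (Finset.mem_univ i)
    have hns : Complex.normSq (x i) = 0 := by
      have hhi := hh i hi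
      rcases mul_eq_zero.mp this with h1 | h1
      · exfalso; linarith
      · exact h1
    exact Complex.normSq_eq_zero.mp hns
  -- x constant along edges
  have hedge : ∀ i j, 0 < B i j → x i = x j := by
    intro i j hBij
    have houter := (Finset.sum_eq_zero_iff_of_nonneg hRterm).mp hR0 i (Finset.mem_univ i)
    have hinner : ∀ k ∈ Finset.univ, (0:ℝ) ≤ B i k * Complex.normSq (x i - x k) := by
      intro k _
      by_cases hik : i = k
      · simp [hik]
      · exact mul_nonneg (hBoff i k hik) (Complex.normSq_nonneg _)
    have := (Finset.sum_eq_zero_iff_of_nonneg hinner).mp houter j (Finset.mem_univ j)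
    have hns : Complex.normSq (x i - x j) = 0 := by
      rcases mul_eq_zero.mp this with h1 | h1
      · exfalso; linarith
      · exact h1
    have := Complex.normSq_eq_zero.mp hns
    exact sub_eq_zero.mp this
  -- connectivity
  classical
  set S : Finset (Fin n) := Finset.univ.filter (fun i => x i = 0) with hSdef
  have hSne : S.Nonempty := by
    obtain ⟨i0, hi0⟩ := hVt
    exact ⟨i0, Finset.mem_filter.mpr ⟨Finset.mem_univ i0, hxVt i0 hi0⟩⟩
  have hSuniv : S = Finset.univ := by
    by_contra hne
    obtain ⟨i, hiS, j, hjS, hBij⟩ := hBconn S hSne hne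
    have hxi : x i = 0 := (Finset.mem_filter.mp hiS).2
    have hxj : x j = 0 := by rw [← hedge i j hBij, hxi]
    exact hjS (Finset.mem_filter.mpr ⟨Finset.mem_univ j, hxj⟩)
  intro i
  have : i ∈ S := hSuniv ▸ Finset.mem_univ i
  exact (Finset.mem_filter.mp this).2

/- Theorem 2 (in terms of `Y′`): for a lossless inductive connected power network `B`,
generator stator admittances `g i + I * h i` (nonnegative conductance, negative
susceptance at terminal buses), constant-impedance active loads `c i`, and reactive
loads with nonpositive equivalent susceptance `b i` and exponent `β i ≥ 1`, the block
matrix `Y′` is nonsingular for every angle vector `θ`. -/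
theorem Yprime_never_singular
    (n : ℕ) (hn : 1 ≤ n)
    (Vt : Finset (Fin n)) (hVt : Vt.Nonempty)
    (B : Matrix (Fin n) (Fin n) ℝ) (hBsym : B.IsSymm)
    (hBoff : ∀ i j, i ≠ j → 0 ≤ B i j)
    (hBdiag : ∀ i, B i i = -∑ j ∈ Finset.univ.erase i, B i j)
    (hBconn : ∀ S : Finset (Fin n), S.Nonempty → S ≠ Finset.univ →
      ∃ i ∈ S, ∃ j ∉ S, 0 < B i j)
    (g h c b β : Fin n → ℝ)
    (hg : ∀ i, 0 ≤ g i) (hg0 : ∀ i ∉ Vt, g i = 0)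
    (hh : ∀ i ∈ Vt, h i < 0) (hh0 : ∀ i ∉ Vt, h i = 0)
    (hb : ∀ i, b i ≤ 0) (hβ : ∀ i, 1 ≤ β i)
    (Y₁ Y₂ : Matrix (Fin n) (Fin n) ℂ)
    (hY₁ : Y₁ = Complex.I • B.map (fun x => (x : ℂ)) +
      Matrix.diagonal (fun i => ((g i + c i : ℝ) : ℂ) +
        Complex.I * ((h i + β i * b i / 2 : ℝ) : ℂ)))
    (hY₂ : Y₂ = Matrix.diagonal (fun i => Complex.I * (((1 - β i / 2) * b i : ℝ) : ℂ)))
    (θ : Fin n → ℝ)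
    (T : Matrix (Fin n) (Fin n) ℂ)
    (hT : T = Matrix.diagonal fun i => Complex.exp (2 * Complex.I * (θ i : ℂ)))
    (Y' : Matrix (Fin n ⊕ Fin n) (Fin n ⊕ Fin n) ℂ)
    (hY' : Y' = Matrix.fromBlocks (Y₁.map (starRingEnd ℂ)) ((Y₂ * T).map (starRingEnd ℂ))
      (Y₂ * T) Y₁) :
    Y'.det ≠ 0 := by
  intro hdet
  obtain ⟨v, hv0, hvk⟩ := Matrix.exists_mulVec_eq_zero_iff.mpr hdet
  classical
  set dd : Fin n → ℂ := fun i =>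
    Complex.I * (((1 - β i / 2) * b i : ℝ) : ℂ) * Complex.exp (2 * Complex.I * (θ i : ℂ))
    with hdd
  have hD : Y₂ * T = Matrix.diagonal dd := by
    rw [hY₂, hT, Matrix.diagonal_mul_diagonal]
  set u : Fin n → ℂ := fun i => v (Sum.inl i) with hu
  set w : Fin n → ℂ := fun i => v (Sum.inr i) with hw
  set a : Fin n → ℂ := fun i => ((g i + c i : ℝ) : ℂ) +
      Complex.I * ((h i + β i * b i / 2 : ℝ) : ℂ) with hadef
  have ha : ∀ i, (a i).im = h i + β i * b i / 2 := by
    intro i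
    simp [hadef, Complex.add_im, Complex.mul_im]
  -- pointwise kernel equations
  have E1s : ∀ i, (∑ j, (starRingEnd ℂ) (Y₁ i j) * u j) + (starRingEnd ℂ) (dd i) * w i = 0 := by
    intro i
    have := congrFun hvk (Sum.inl i)
    rw [hY', hD] at this
    simpa [Matrix.mulVec, dotProduct, Fintype.sum_sum_type, Matrix.map_apply,
      Matrix.diagonal_apply, apply_ite, ite_mul, Finset.sum_ite_eq] using this
  have E2s : ∀ i, dd i * u i + (∑ j, Y₁ i j * w j) = 0 := by
    intro i
    have := congrFun hvk (Sum.inr i)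
    rw [hY', hD] at this
    simpa [Matrix.mulVec, dotProduct, Fintype.sum_sum_type, Matrix.map_apply,
      Matrix.diagonal_apply, apply_ite, ite_mul, Finset.sum_ite_eq] using this
  have E1c : ∀ i, (∑ j, Y₁ i j * (starRingEnd ℂ) (u j)) + dd i * (starRingEnd ℂ) (w i) = 0 := by
    intro i
    have := congrArg (starRingEnd ℂ) (E1s i)
    simpa [map_add, map_sum, map_mul, Complex.conj_conj] using this
  -- Y₁ row sums
  have hY1sum : ∀ (z : Fin n → ℂ) i, ∑ j, Y₁ i j * z j
      = Complex.I * (∑ j, (B i j : ℂ) * z j) + a i * z i := by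
    intro z i
    rw [hY₁]
    simp only [Matrix.add_apply, Matrix.smul_apply, Matrix.map_apply, Matrix.diagonal_apply,
      smul_eq_mul]
    rw [show (∑ j, (Complex.I * (B i j : ℂ) + (if i = j then a i else 0)) * z j)
        = ∑ j, (Complex.I * ((B i j : ℂ) * z j) + (if i = j then a i * z j else 0)) from
      Finset.sum_congr rfl fun j _ => by split <;> ring]
    rw [Finset.sum_add_distrib, ← Finset.mul_sum, Finset.sum_ite_eq]
    simp
  -- bound on dd
  have hdabs : ∀ i, ‖dd i‖ ≤ -(β i * b i / 2) := by
    intro i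
    have hre : (2 * Complex.I * (θ i : ℂ)).re = 0 := by
      simp [Complex.mul_re, Complex.mul_im]
    have : ‖dd i‖ = |(1 - β i / 2) * b i| := by
      rw [hdd]
      simp only [norm_mul, Complex.norm_I, Complex.norm_real, Real.norm_eq_abs, Complex.norm_exp, hre,
        Real.exp_zero, one_mul, mul_one, abs_mul]
    rw [this, abs_mul, abs_of_nonpos (hb i)]
    have h1 : |1 - β i / 2| ≤ β i / 2 := abs_le.mpr ⟨by linarith [hβ i], by linarith [hβ i]⟩
    nlinarith [hb i, abs_nonneg (1 - β i / 2)]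
  -- combine equations
  have hx : ∀ i, Complex.I * (∑ j, (B i j : ℂ) * (w j + (starRingEnd ℂ) (u j))) +
      a i * (w i + (starRingEnd ℂ) (u i))
      = (-(dd i)) * (starRingEnd ℂ) (w i + (starRingEnd ℂ) (u i)) := by
    intro i
    have h1 := E1c i
    have h2 := E2s i
    rw [hY1sum (fun j => (starRingEnd ℂ) (u j)) i] at h1
    rw [hY1sum w i] at h2
    have hs : ∑ j, (B i j : ℂ) * (w j + (starRingEnd ℂ) (u j))
        = (∑ j, (B i j : ℂ) * w j) + ∑ j, (B i j : ℂ) * (starRingEnd ℂ) (u j) := by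
      rw [← Finset.sum_add_distrib]; exact Finset.sum_congr rfl fun j _ => by ring
    rw [hs, map_add, Complex.conj_conj]
    linear_combination h1 + h2
  have hy : ∀ i, Complex.I * (∑ j, (B i j : ℂ) * (w j - (starRingEnd ℂ) (u j))) +
      a i * (w i - (starRingEnd ℂ) (u i))
      = dd i * (starRingEnd ℂ) (w i - (starRingEnd ℂ) (u i)) := by
    intro i
    have h1 := E1c i
    have h2 := E2s i
    rw [hY1sum (fun j => (starRingEnd ℂ) (u j)) i] at h1
    rw [hY1sum w i] at h2
    have hs : ∑ j, (B i j : ℂ) * (w j - (starRingEnd ℂ) (u j))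
        = (∑ j, (B i j : ℂ) * w j) - ∑ j, (B i j : ℂ) * (starRingEnd ℂ) (u j) := by
      rw [← Finset.sum_sub_distrib]; exact Finset.sum_congr rfl fun j _ => by ring
    rw [hs, map_sub, Complex.conj_conj]
    linear_combination h2 - h1
  have hx0 := key_lemma n Vt hVt B hBsym hBoff hBdiag hBconn h b β hh hh0 hb hβ a ha
    (fun i => -(dd i)) (fun i => by simpa using hdabs i)
    (fun i => w i + (starRingEnd ℂ) (u i)) hx
  have hy0 := key_lemma n Vt hVt B hBsym hBoff hBdiag hBconn h b β hh hh0 hb hβ a ha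
    dd hdabs (fun i => w i - (starRingEnd ℂ) (u i)) hy
  have hw0 : ∀ i, w i = 0 := by
    intro i
    have := hx0 i
    have := hy0 i
    linear_combination (hx0 i + hy0 i) / 2
  have hu0 : ∀ i, u i = 0 := by
    intro i
    have hcu : (starRingEnd ℂ) (u i) = 0 := by
      linear_combination (hx0 i - hy0 i) / 2
    simpa using congrArg (starRingEnd ℂ) hcu
  apply hv0
  funext k
  cases k with
  | inl i => exact hu0 i
  | inr i => exact hw0 i
end

section
/- For every θ : {1,…,n} → ℝ and every V : {1,…,n} → ℝ with V_i ≠ 0 for all i, the real 2n×2n matrix J is nonsingular (det J ≠ 0). (This is Theorem 2 of the paper: under the stated network and load conditions, system trajectories never encounter the impasse surface.) -/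
open Complex Finset

-- Laplacian-type identity
lemma lap_identity {n : ℕ} (B : Matrix (Fin n) (Fin n) ℝ) (hBsym : B.IsSymm)
    (hBdiag : ∀ i, B i i = -∑ j ∈ Finset.univ.erase i, B i j)
    (w : Fin n → ℂ) :
    ∑ i, ∑ j, B i j * Complex.normSq (w i - w j) =
      -2 * ∑ i, ∑ j, B i j * ((starRingEnd ℂ) (w i) * w j).re := by
  have hrow : ∀ i, ∑ j, B i j = 0 := by
    intro i
    rw [← Finset.add_sum_erase _ _ (Finset.mem_univ i), hBdiag]
    ring
  have hcol : ∀ j, ∑ i, B i j = 0 := by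
    intro j
    have : ∀ i : Fin n, B i j = B j i := fun i => (hBsym.apply j i)
    simp_rw [this]
    exact hrow j
  have hterm : ∀ i j : Fin n, B i j * Complex.normSq (w i - w j) =
      B i j * Complex.normSq (w i) + B i j * Complex.normSq (w j)
        - 2 * (B i j * ((starRingEnd ℂ) (w i) * w j).re) := by
    intro i j
    simp [Complex.normSq_apply, Complex.sub_re, Complex.sub_im, Complex.mul_re,
      Complex.conj_re, Complex.conj_im]
    ring
  have inner : ∀ i, ∑ j, (B i j * Complex.normSq (w i) + B i j * Complex.normSq (w j)
      - 2 * (B i j * ((starRingEnd ℂ) (w i) * w j).re)) =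
      (∑ j, B i j * Complex.normSq (w j)) - ∑ j, 2 * (B i j * ((starRingEnd ℂ) (w i) * w j).re) := by
    intro i
    rw [Finset.sum_sub_distrib, Finset.sum_add_distrib, ← Finset.sum_mul, hrow i, zero_mul, zero_add]
  calc ∑ i, ∑ j, B i j * Complex.normSq (w i - w j)
      = ∑ i, ((∑ j, B i j * Complex.normSq (w j))
          - ∑ j, 2 * (B i j * ((starRingEnd ℂ) (w i) * w j).re)) := by
        refine Finset.sum_congr rfl (fun i _ => ?_)
        rw [Finset.sum_congr rfl (fun j _ => hterm i j), inner i]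
    _ = (∑ i, ∑ j, B i j * Complex.normSq (w j))
          - ∑ i, ∑ j, 2 * (B i j * ((starRingEnd ℂ) (w i) * w j).re) := Finset.sum_sub_distrib _ _
    _ = -2 * ∑ i, ∑ j, B i j * ((starRingEnd ℂ) (w i) * w j).re := by
        rw [Finset.sum_comm]
        have : ∀ j, ∑ i, B i j * Complex.normSq (w j) = 0 := by
          intro j; rw [← Finset.sum_mul, hcol j, zero_mul]
        rw [Finset.sum_congr rfl (fun j _ => this j)]
        simp [Finset.mul_sum]

theorem impasse_surface_never_encountered
    (n : ℕ) (hn : 1 ≤ n)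
    (Vt : Finset (Fin n)) (hVt : Vt.Nonempty)
    (B : Matrix (Fin n) (Fin n) ℝ) (hBsym : B.IsSymm)
    (hBoff : ∀ i j, i ≠ j → 0 ≤ B i j)
    (hBdiag : ∀ i, B i i = -∑ j ∈ Finset.univ.erase i, B i j)
    (hBconn : ∀ S : Finset (Fin n), S.Nonempty → S ≠ Finset.univ →
      ∃ i ∈ S, ∃ j ∉ S, 0 < B i j)
    (g h c b β : Fin n → ℝ)
    (hg : ∀ i, 0 ≤ g i) (hg0 : ∀ i ∉ Vt, g i = 0)
    (hh : ∀ i ∈ Vt, h i < 0) (hh0 : ∀ i ∉ Vt, h i = 0)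
    (hb : ∀ i, b i ≤ 0) (hβ : ∀ i, 1 ≤ β i)
    (Y₁ Y₂ : Matrix (Fin n) (Fin n) ℂ)
    (hY₁ : Y₁ = Complex.I • B.map (fun x => (x : ℂ)) +
      Matrix.diagonal (fun i => ((g i + c i : ℝ) : ℂ) +
        Complex.I * ((h i + β i * b i / 2 : ℝ) : ℂ)))
    (hY₂ : Y₂ = Matrix.diagonal (fun i => Complex.I * (((1 - β i / 2) * b i : ℝ) : ℂ)))
    (θ V : Fin n → ℝ) (hV : ∀ i, V i ≠ 0)
    (D W Z : Matrix (Fin n) (Fin n) ℂ)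
    (hD : D = Matrix.diagonal fun i => (V i : ℂ) * Complex.exp (Complex.I * (θ i : ℂ)))
    (hW : W = D * Y₁.map (starRingEnd ℂ) * D.map (starRingEnd ℂ))
    (hZ : Z = Matrix.diagonal fun i => Y₂ i i * (V i : ℂ) ^ 2)
    (E F M N : Matrix (Fin n) (Fin n) ℝ)
    (hE : E = fun i j => (W i j).im - (Z i j).im)
    (hF : F = fun i j => (W i j).re - (Z i j).re)
    (hM : M = fun i j => -(W i j).re - (Z i j).re)
    (hN : N = fun i j => (W i j).im + (Z i j).im)
    (J : Matrix (Fin n ⊕ Fin n) (Fin n ⊕ Fin n) ℝ)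
    (hJ : J = Matrix.fromBlocks E F M N) :
    J.det ≠ 0 := by
  intro hdet
  obtain ⟨p, hp0, hker⟩ := Matrix.exists_mulVec_eq_zero_iff.2 hdet
  set x : Fin n → ℝ := fun i => p (Sum.inl i) with hx
  set y : Fin n → ℝ := fun i => p (Sum.inr i) with hy
  set u : Fin n → ℂ := fun i => ⟨x i, y i⟩ with hu
  -- real kernel equations
  have h1 : ∀ i, (∑ j, E i j * x j) + ∑ j, F i j * y j = 0 := by
    intro i
    have := congrFun hker (Sum.inl i)
    simpa [hJ, Matrix.mulVec, dotProduct, Fintype.sum_sum_type,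
      Matrix.fromBlocks] using this
  have h2 : ∀ i, (∑ j, M i j * x j) + ∑ j, N i j * y j = 0 := by
    intro i
    have := congrFun hker (Sum.inr i)
    simpa [hJ, Matrix.mulVec, dotProduct, Fintype.sum_sum_type,
      Matrix.fromBlocks] using this
  -- complex kernel equation
  have key : ∀ i, ∑ j, (W i j * u j + (starRingEnd ℂ) (Z i j * u j)) = 0 := by
    intro i
    apply Complex.ext
    · rw [Complex.re_sum]
      have h2' : (∑ j, (-(W i j).re - (Z i j).re) * x j) +
          ∑ j, ((W i j).im + (Z i j).im) * y j = 0 := by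
        simpa [hM, hN] using h2 i
      rw [← Finset.sum_add_distrib] at h2'
      have : ∀ j : Fin n, (W i j * u j + (starRingEnd ℂ) (Z i j * u j)).re =
          -((-(W i j).re - (Z i j).re) * x j + ((W i j).im + (Z i j).im) * y j) := by
        intro j
        simp [Complex.add_re, Complex.mul_re, Complex.conj_re, Complex.conj_im, hu]
        ring
      rw [Finset.sum_congr rfl (fun j _ => this j), Finset.sum_neg_distrib, h2', neg_zero]
      simp
    · rw [Complex.im_sum]
      have h1' : (∑ j, ((W i j).im - (Z i j).im) * x j) +
          ∑ j, ((W i j).re - (Z i j).re) * y j = 0 := by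
        simpa [hE, hF] using h1 i
      rw [← Finset.sum_add_distrib] at h1'
      have : ∀ j : Fin n, (W i j * u j + (starRingEnd ℂ) (Z i j * u j)).im =
          ((W i j).im - (Z i j).im) * x j + ((W i j).re - (Z i j).re) * y j := by
        intro j
        simp [Complex.add_im, Complex.mul_im, Complex.conj_re, Complex.conj_im, hu]
        ring
      rw [Finset.sum_congr rfl (fun j _ => this j), h1']
      simp
  
  -- diagonal entries of D
  set d : Fin n → ℂ := fun i => (V i : ℂ) * Complex.exp (Complex.I * (θ i : ℂ)) with hd
  have hd0 : ∀ i, d i ≠ 0 := by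
    intro i
    exact mul_ne_zero (Complex.ofReal_ne_zero.2 (hV i)) (Complex.exp_ne_zero _)
  set w : Fin n → ℂ := fun i => d i * (starRingEnd ℂ) (u i) with hwdef
  have hWapp : ∀ i j, W i j = d i * (starRingEnd ℂ) (Y₁ i j) * (starRingEnd ℂ) (d j) := by
    intro i j
    rw [hW, hD, Matrix.diagonal_map (map_zero _)]
    simp [Matrix.diagonal_mul, Matrix.mul_diagonal, Matrix.map_apply, hd]
  have keyc : ∀ i, ∑ j, ((starRingEnd ℂ) (W i j) * (starRingEnd ℂ) (u j) * u i
      + Z i j * u j * u i) = 0 := by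
    intro i
    have h0 : (∑ j, ((starRingEnd ℂ) (W i j) * (starRingEnd ℂ) (u j) + Z i j * u j)) = 0 := by
      have := congrArg (starRingEnd ℂ) (key i)
      simpa [map_sum, map_add, map_mul, Complex.conj_conj] using this
    calc ∑ j, ((starRingEnd ℂ) (W i j) * (starRingEnd ℂ) (u j) * u i + Z i j * u j * u i)
        = (∑ j, ((starRingEnd ℂ) (W i j) * (starRingEnd ℂ) (u j) + Z i j * u j)) * u i := by
          rw [Finset.sum_mul]
          exact Finset.sum_congr rfl (fun j _ => by ring)
      _ = 0 := by rw [h0, zero_mul]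
  have big : (∑ i, ∑ j, (starRingEnd ℂ) (W i j) * (starRingEnd ℂ) (u j) * u i)
      + ∑ i, ∑ j, Z i j * u j * u i = 0 := by
    rw [← Finset.sum_add_distrib]
    refine Finset.sum_eq_zero (fun i _ => ?_)
    rw [← Finset.sum_add_distrib]
    exact keyc i
  have t1 : ∀ i j, (starRingEnd ℂ) (W i j) * (starRingEnd ℂ) (u j) * u i
      = (starRingEnd ℂ) (w i) * Y₁ i j * w j := by
    intro i j
    rw [hWapp i j, hwdef]
    simp only [map_mul, Complex.conj_conj]
    ring
  have t2 : ∀ i, ∑ j, Z i j * u j * u i = Y₂ i i * (V i : ℂ)^2 * (u i)^2 := by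
    intro i
    rw [hZ]
    simp only [Matrix.diagonal_apply, ite_mul, zero_mul]
    rw [Finset.sum_ite_eq univ i (fun j => Y₂ i i * (V i:ℂ)^2 * u j * u i)]
    simp only [Finset.mem_univ, if_pos]
    ring
  have hP : (∑ i, ∑ j, (starRingEnd ℂ) (w i) * Y₁ i j * w j)
      + ∑ i, Y₂ i i * (V i : ℂ)^2 * (u i)^2 = 0 := by
    rw [← big]
    congr 1
    · exact Finset.sum_congr rfl (fun i _ => Finset.sum_congr rfl (fun j _ => (t1 i j).symm))
    · exact Finset.sum_congr rfl (fun i _ => (t2 i).symm)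
  -- imaginary part
  have imY : ∀ i j, ((starRingEnd ℂ) (w i) * Y₁ i j * w j).im =
      B i j * ((starRingEnd ℂ) (w i) * w j).re +
        (if i = j then (h i + β i * b i / 2) * Complex.normSq (w i) else 0) := by
    intro i j
    rw [hY₁]
    by_cases hij : i = j
    · subst hij
      simp only [Matrix.add_apply, Matrix.smul_apply, Matrix.map_apply,
        Matrix.diagonal_apply_eq, smul_eq_mul, if_pos rfl]
      simp [Complex.mul_im, Complex.mul_re, Complex.normSq_apply, Complex.add_re,
        Complex.add_im]
      ring_nf
    · simp only [Matrix.add_apply, Matrix.smul_apply, Matrix.map_apply,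
        Matrix.diagonal_apply_ne _ hij, smul_eq_mul, if_neg hij, add_zero]
      simp [Complex.mul_im, Complex.mul_re]
      ring
  have imZ : ∀ i, (Y₂ i i * (V i : ℂ)^2 * (u i)^2).im =
      (1 - β i / 2) * b i * (V i)^2 * ((x i)^2 - (y i)^2) := by
    intro i
    rw [hY₂]
    simp only [Matrix.diagonal_apply_eq]
    have hure : (u i).re = x i := rfl
    have huim : (u i).im = y i := rfl
    simp [pow_two, Complex.mul_im, Complex.mul_re, hure, huim]
  have hnsqu : ∀ i, Complex.normSq (u i) = (x i)^2 + (y i)^2 := by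
    intro i
    have hure : (u i).re = x i := rfl
    have huim : (u i).im = y i := rfl
    rw [Complex.normSq_apply, hure, huim]
    ring
  have hnsqw : ∀ i, Complex.normSq (w i) = (V i)^2 * ((x i)^2 + (y i)^2) := by
    intro i
    have he : Complex.normSq (Complex.exp (Complex.I * (θ i : ℂ))) = 1 := by
      rw [Complex.normSq_eq_norm_sq, Complex.norm_exp]
      simp [Complex.mul_re]
    have hws : Complex.normSq (w i) = Complex.normSq (d i) * Complex.normSq (u i) := by
      simp [hwdef, map_mul, Complex.normSq_conj]
    rw [hws]
    simp only [hd, map_mul, he, Complex.normSq_ofReal, mul_one, hnsqu]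
    ring
  -- the real equation
  have hPim : (∑ i, ∑ j, B i j * ((starRingEnd ℂ) (w i) * w j).re)
      + ∑ i, ((h i + β i * b i / 2) * ((V i)^2 * ((x i)^2 + (y i)^2))
        + (1 - β i / 2) * b i * (V i)^2 * ((x i)^2 - (y i)^2)) = 0 := by
    have := congrArg Complex.im hP
    rw [Complex.add_im, Complex.im_sum, Complex.im_sum] at this
    simp only [Complex.im_sum, imY, imZ] at this
    rw [Finset.sum_congr rfl (fun i (_ : i ∈ univ) => Finset.sum_add_distrib)] at this
    rw [Finset.sum_add_distrib] at this
    simp only [Finset.sum_ite_eq, Finset.mem_univ, if_pos] at this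
    rw [Complex.zero_im] at this
    rw [Finset.sum_add_distrib]
    simp only [← hnsqw]
    linarith [this]
  
  -- sign analysis
  set Q : ℝ := ∑ i, ∑ j, B i j * ((starRingEnd ℂ) (w i) * w j).re with hQdef
  set t : Fin n → ℝ := fun i => (h i + β i * b i / 2) * ((V i)^2 * ((x i)^2 + (y i)^2))
    + (1 - β i / 2) * b i * (V i)^2 * ((x i)^2 - (y i)^2) with ht
  have hQt : Q + ∑ i, t i = 0 := hPim
  have hbterm : ∀ i, b i * ((x i)^2 + (β i - 1) * (y i)^2) ≤ 0 := by
    intro i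
    apply mul_nonpos_of_nonpos_of_nonneg (hb i)
    nlinarith [sq_nonneg (x i), sq_nonneg (y i), hβ i]
  have hhle : ∀ i, h i ≤ 0 := by
    intro i
    by_cases hi : i ∈ Vt
    · exact le_of_lt (hh i hi)
    · exact le_of_eq (hh0 i hi)
  have hteq : ∀ i, t i = (V i)^2 * (h i * ((x i)^2 + (y i)^2)
      + b i * ((x i)^2 + (β i - 1) * (y i)^2)) := by
    intro i; simp only [ht]; ring
  have htle : ∀ i, t i ≤ 0 := by
    intro i
    rw [hteq i]
    apply mul_nonpos_of_nonneg_of_nonpos (sq_nonneg _)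
    have h1 := hbterm i
    have h2 : h i * ((x i)^2 + (y i)^2) ≤ 0 :=
      mul_nonpos_of_nonpos_of_nonneg (hhle i) (by positivity)
    linarith
  have hlap := lap_identity B hBsym hBdiag w
  have htermnn : ∀ i j : Fin n, 0 ≤ B i j * Complex.normSq (w i - w j) := by
    intro i j
    by_cases hij : i = j
    · subst hij; simp
    · exact mul_nonneg (hBoff i j hij) (Complex.normSq_nonneg _)
  have hnn : 0 ≤ ∑ i, ∑ j, B i j * Complex.normSq (w i - w j) :=
    Finset.sum_nonneg (fun i _ => Finset.sum_nonneg (fun j _ => htermnn i j))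
  have hQle : Q ≤ 0 := by nlinarith [hnn, hlap]
  have hsumt : ∑ i, t i = 0 := by
    have h1 : ∑ i, t i ≤ 0 := Finset.sum_nonpos (fun i _ => htle i)
    linarith
  have hQ0 : Q = 0 := by linarith
  have ht0 : ∀ i, t i = 0 := by
    intro i
    have := (Finset.sum_eq_zero_iff_of_nonpos (fun i _ => htle i)).1 hsumt
    exact this i (Finset.mem_univ i)
  -- rigidity
  have hall0 : ∀ i j, 0 < B i j → w i = w j := by
    have hzero : ∑ i, ∑ j, B i j * Complex.normSq (w i - w j) = 0 := by
      rw [hlap, ← hQdef, hQ0]; ring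
    have h1 := (Finset.sum_eq_zero_iff_of_nonneg
      (fun i _ => Finset.sum_nonneg (fun j _ => htermnn i j))).1 hzero
    intro i j hB
    have h2 := (Finset.sum_eq_zero_iff_of_nonneg
      (fun j _ => htermnn i j)).1 (h1 i (Finset.mem_univ i)) j (Finset.mem_univ j)
    have hnsq : Complex.normSq (w i - w j) = 0 := by
      rcases mul_eq_zero.1 h2 with hcase | hcase
      · exact absurd hcase (ne_of_gt hB)
      · exact hcase
    have := Complex.normSq_eq_zero.1 hnsq
    exact sub_eq_zero.1 this
  -- vanishing on terminal buses
  have hwVt : ∀ i ∈ Vt, w i = 0 := by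
    intro i hi
    have hV2 : (0:ℝ) < (V i)^2 := lt_of_le_of_ne (sq_nonneg _) (Ne.symm (pow_ne_zero 2 (hV i)))
    have hti := ht0 i
    rw [hteq i] at hti
    have hinner : h i * ((x i)^2 + (y i)^2)
        + b i * ((x i)^2 + (β i - 1) * (y i)^2) = 0 := by
      rcases mul_eq_zero.1 hti with hcase | hcase
      · exact absurd hcase (ne_of_gt hV2)
      · exact hcase
    have hhi := hh i hi
    have hs : (x i)^2 + (y i)^2 ≤ 0 := by nlinarith [hbterm i]
    have hx0 : x i = 0 := by
      have hx2 : (x i)^2 = 0 :=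
        le_antisymm (by linarith [sq_nonneg (y i)]) (sq_nonneg _)
      exact sq_eq_zero_iff.1 hx2
    have hy0 : y i = 0 := by
      have hy2 : (y i)^2 = 0 :=
        le_antisymm (by linarith [sq_nonneg (x i)]) (sq_nonneg _)
      exact sq_eq_zero_iff.1 hy2
    have hui : u i = 0 := by
      apply Complex.ext
      · exact hx0
      · exact hy0
    simp [hwdef, hui]
  -- connectivity: w vanishes everywhere
  classical
  obtain ⟨i₁, hi₁⟩ := hVt
  set S : Finset (Fin n) := Finset.univ.filter (fun j => w j = 0) with hS
  have hSne : S.Nonempty := ⟨i₁, by simp [hS, hwVt i₁ hi₁]⟩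
  have hSuniv : S = Finset.univ := by
    by_contra hne
    obtain ⟨i, hiS, j, hjS, hBij⟩ := hBconn S hSne hne
    have hwj : w j = 0 := by
      rw [← hall0 i j hBij]
      exact (Finset.mem_filter.1 hiS).2
    exact hjS (Finset.mem_filter.2 ⟨Finset.mem_univ j, hwj⟩)
  have hw0 : ∀ i, w i = 0 := by
    intro i
    have hiS : i ∈ S := hSuniv.symm ▸ Finset.mem_univ i
    exact (Finset.mem_filter.1 hiS).2
  have hu0 : ∀ i, u i = 0 := by
    intro i
    have h0 := hw0 i
    rw [hwdef] at h0
    rcases mul_eq_zero.1 h0 with hcase | hcase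
    · exact absurd hcase (hd0 i)
    · exact (map_eq_zero _).1 hcase
  apply hp0
  funext k
  cases k with
  | inl i =>
    have := congrArg Complex.re (hu0 i)
    simpa using this
  | inr i =>
    have := congrArg Complex.im (hu0 i)
    simpa using this
end

section
/- Let A be an N×N complex matrix such that every row is weakly diagonally dominant, i.e., Σ_{j≠i} |A_ij| ≤ |A_ii| for every i. Let S = { i : Σ_{j≠i} |A_ij| < |A_ii| } be the set of strictly diagonally dominant rows, and suppose that for every index i ∉ S there exists a finite sequence i = k₀, k₁, …, k_r with A_{k_{l−1} k_l} ≠ 0 for each l = 1, …, r and k_r ∈ S. Then A is nonsingular (det A ≠ 0). -/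
/- Nonsingularity of weakly chained diagonally dominant (WCDD) matrices: every row
is weakly diagonally dominant, and from every non-strictly-dominant row there is a
walk in the directed graph of nonzero entries to a strictly diagonally dominant row. -/
theorem wcdd_nonsingular
    (N : ℕ) (A : Matrix (Fin N) (Fin N) ℂ)
    (hdom : ∀ i, ∑ j ∈ Finset.univ.erase i, ‖A i j‖ ≤ ‖A i i‖)
    (S : Set (Fin N))
    (hS : S = {i | ∑ j ∈ Finset.univ.erase i, ‖A i j‖ < ‖A i i‖})
    (hchain : ∀ i ∉ S, ∃ (r : ℕ) (k : ℕ → Fin N), k 0 = i ∧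
      (∀ l < r, A (k l) (k (l + 1)) ≠ 0) ∧ k r ∈ S) :
    A.det ≠ 0 := by
  intro hdet
  obtain ⟨x, hx0, hxA⟩ := Matrix.exists_mulVec_eq_zero_iff.mpr hdet
  -- N > 0
  have hN : 0 < N := by
    rcases Nat.eq_zero_or_pos N with h | h
    · exfalso; subst h; exact hx0 (funext fun i => i.elim0)
    · exact h
  obtain ⟨i₀, -, hi₀⟩ := Finset.exists_max_image Finset.univ (fun i => ‖x i‖)
    ⟨⟨0, hN⟩, Finset.mem_univ _⟩
  set M : ℝ := ‖x i₀‖ with hM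
  have hle : ∀ i, ‖x i‖ ≤ M := fun i => hi₀ i (Finset.mem_univ i)
  have hMpos : 0 < M := by
    obtain ⟨j, hj⟩ : ∃ j, x j ≠ 0 := by
      by_contra h
      push_neg at h
      exact hx0 (funext h)
    exact lt_of_lt_of_le (norm_pos_iff.mpr hj) (hle j)
  -- key lemma
  have key : ∀ i, ‖x i‖ = M →
      (i ∉ S ∧ ∀ j, A i j ≠ 0 → ‖x j‖ = M) := by
    intro i hi
    have hrow : ∑ j, A i j * x j = 0 := congrFun hxA i
    have hsplit : A i i * x i = -∑ j ∈ Finset.univ.erase i, A i j * x j := by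
      have := Finset.add_sum_erase Finset.univ (fun j => A i j * x j) (Finset.mem_univ i)
      rw [← this] at hrow
      linear_combination hrow
    have h1 : ‖A i i‖ * M = ‖∑ j ∈ Finset.univ.erase i, A i j * x j‖ := by
      have h := congrArg norm hsplit
      rw [norm_mul, hi, norm_neg] at h
      exact h
    have h2 : ‖∑ j ∈ Finset.univ.erase i, A i j * x j‖
        ≤ ∑ j ∈ Finset.univ.erase i, ‖A i j‖ * ‖x j‖ := by
      refine le_trans (norm_sum_le _ _) (le_of_eq ?_)
      exact Finset.sum_congr rfl fun j _ => norm_mul _ _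
    have h3 : ∑ j ∈ Finset.univ.erase i, ‖A i j‖ * ‖x j‖
        ≤ ∑ j ∈ Finset.univ.erase i, ‖A i j‖ * M :=
      Finset.sum_le_sum fun j _ =>
        mul_le_mul_of_nonneg_left (hle j) (norm_nonneg _)
    have h4 : ∑ j ∈ Finset.univ.erase i, ‖A i j‖ * M
        ≤ ‖A i i‖ * M := by
      rw [← Finset.sum_mul]
      exact mul_le_mul_of_nonneg_right (hdom i) (le_of_lt hMpos)
    have heq3 : ∑ j ∈ Finset.univ.erase i, ‖A i j‖ * ‖x j‖
        = ∑ j ∈ Finset.univ.erase i, ‖A i j‖ * M :=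
      le_antisymm h3 (by linarith [h1, h2, h4])
    constructor
    · intro hiS
      rw [hS] at hiS
      have : ∑ j ∈ Finset.univ.erase i, ‖A i j‖ * M
          < ‖A i i‖ * M := by
        rw [← Finset.sum_mul]
        exact mul_lt_mul_of_pos_right hiS hMpos
      linarith [h1, h2, heq3]
    · intro j hj
      by_cases hji : j = i
      · rw [hji]; exact hi
      · by_contra hjx
        have hjlt : ‖x j‖ < M := lt_of_le_of_ne (hle j) hjx
        have : ∑ j' ∈ Finset.univ.erase i, ‖A i j'‖ * ‖x j'‖
            < ∑ j' ∈ Finset.univ.erase i, ‖A i j'‖ * M := by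
          refine Finset.sum_lt_sum (fun j' _ =>
            mul_le_mul_of_nonneg_left (hle j') (norm_nonneg _)) ?_
          exact ⟨j, Finset.mem_erase.mpr ⟨hji, Finset.mem_univ j⟩,
            mul_lt_mul_of_pos_left hjlt (norm_pos_iff.mpr hj)⟩
        linarith [heq3]
  have hi₀S : i₀ ∉ S := (key i₀ rfl).1
  obtain ⟨r, k, hk0, hkstep, hkr⟩ := hchain i₀ hi₀S
  have hall : ∀ l ≤ r, ‖x (k l)‖ = M := by
    intro l
    induction l with
    | zero => intro _; rw [hk0]
    | succ n ih =>
      intro hn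
      have hn' : n < r := Nat.lt_of_succ_le hn
      exact (key (k n) (ih (le_of_lt hn'))).2 _ (hkstep n hn')
  exact (key (k r) (hall r le_rfl)).1 hkr
end

section
/- Let S, g, h, c, b, β be real numbers with S ≥ 0, g ≥ 0, h < 0, b ≤ 0 and β ≥ 1. Then |(c + g) + i·(−S + h + β·b/2)| > S + |1 − β/2|·|b|, where |·| on the left is the modulus of a complex number. -/
/- The strict diagonal-dominance inequality (eq. (34)) for rows of `Y′`
corresponding to generator terminal buses. -/
theorem generator_row_strictly_dominant
    (S g h c b β : ℝ) (hS : 0 ≤ S) (hg : 0 ≤ g) (hh : h < 0)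
    (hb : b ≤ 0) (hβ : 1 ≤ β) :
    S + |1 - β / 2| * |b| <
      ‖((c + g : ℝ) : ℂ) + Complex.I * ((-S + h + β * b / 2 : ℝ) : ℂ)‖ := by
  have hbb : β * b ≤ 0 := mul_nonpos_of_nonneg_of_nonpos (by linarith) hb
  have key : S + |1 - β / 2| * |b| < |(-S + h + β * b / 2)| := by
    rw [abs_of_nonpos hb, abs_of_nonpos (by linarith : -S + h + β * b / 2 ≤ 0)]
    rcases le_or_gt β 2 with h2 | h2
    · rw [abs_of_nonneg (by linarith : (0:ℝ) ≤ 1 - β / 2)]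
      nlinarith [mul_nonneg (neg_nonneg.2 hb) (by linarith : (0:ℝ) ≤ β - 1)]
    · rw [abs_of_nonpos (by linarith : 1 - β / 2 ≤ 0)]
      nlinarith
  have him := Complex.abs_im_le_norm (((c + g : ℝ) : ℂ) + Complex.I * ((-S + h + β * b / 2 : ℝ) : ℂ))
  simp only [Complex.add_im, Complex.ofReal_im, Complex.mul_im, Complex.I_re, Complex.I_im,
    Complex.ofReal_re, zero_mul, one_mul, zero_add, add_zero] at him
  linarith
end
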